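/- With the data E₀, E₁, π₀, π₁, U, T₀, T₁, N₀, N₁ and V(T₀,T₁) as in the context, and assuming moreover π₀(N₀) ⊆ T₀ and π₁(N₁) ⊆ T₁: V(T₀,T₁)^⊥ equals the set of pairs (λ̃, φ̃) ∈ W(E₀) for which there exists a continuously differentiable map b : [0,1] → E₀* with b(0) ∈ N₀, Uᵀ(b(1)) ∈ N₁, λ̃(u) = π₀(b(u)) for all u ∈ [0,1], and φ̃(u) = −b'(u) for all u ∈ [0,1]. -/

import Mathlib

open MeasureTheory Set

/-- An element of `W(E)`: a pair `(λ, φ)` of continuous maps on `[0,1]` with values in `E`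
and in the dual `E* = E →L[ℝ] ℝ` respectively. -/
structure WPair (E : Type*) [NormedAddCommGroup E] [NormedSpace ℝ E] where
  lam : ℝ → E
  phi : ℝ → E →L[ℝ] ℝ
  lam_cont : ContinuousOn lam (Icc 0 1)
  phi_cont : ContinuousOn phi (Icc 0 1)

/-- The alternating bilinear form `Ω((λ,φ),(λ',φ')) = ∫₀¹ (φ(u)(λ'(u)) − φ'(u)(λ(u))) du`. -/
noncomputable def Omega {E : Type*} [NormedAddCommGroup E] [NormedSpace ℝ E]
    (w w' : WPair E) : ℝ :=
  ∫ u in (0:ℝ)..(1:ℝ), (w.phi u (w'.lam u) - w'.phi u (w.lam u))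

/-- The `Ω`-orthogonal of a subset of `W(E)`. -/
def orth {E : Type*} [NormedAddCommGroup E] [NormedSpace ℝ E] (A : Set (WPair E)) :
    Set (WPair E) :=
  {w | ∀ a ∈ A, Omega a w = 0}

/-- The annihilator `N = { α ∈ E* : α vanishes on T }` of a subspace `T ⊆ E`. -/
def Ann {E : Type*} [NormedAddCommGroup E] [NormedSpace ℝ E] (T : Submodule ℝ E) :
    Set (E →L[ℝ] ℝ) :=
  {α | ∀ v ∈ T, α v = 0}

/-- The space `V(T₀,T₁)` of solutions `(λ,φ)` of `λ(u) = λ(0) − π₀ ∫₀ᵘ φ` with boundary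
conditions `λ(0) ∈ T₀` and `U⁻¹(λ(1)) ∈ T₁`. -/
noncomputable def VSet {E₀ E₁ : Type*}
    [NormedAddCommGroup E₀] [NormedSpace ℝ E₀]
    [NormedAddCommGroup E₁] [NormedSpace ℝ E₁]
    (π₀ : (E₀ →L[ℝ] ℝ) →ₗ[ℝ] E₀) (U : E₁ ≃L[ℝ] E₀)
    (T₀ : Submodule ℝ E₀) (T₁ : Submodule ℝ E₁) : Set (WPair E₀) :=
  {w | (∀ u ∈ Icc (0:ℝ) 1, w.lam u = w.lam 0 - π₀ (∫ s in (0:ℝ)..u, w.phi s)) ∧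
       w.lam 0 ∈ T₀ ∧ U.symm (w.lam 1) ∈ T₁}

noncomputable section OmegaAux

/-- clamp to `[0,1]` -/
def cl (u : ℝ) : ℝ := max 0 (min 1 u)

lemma cl_mem (u : ℝ) : cl u ∈ Icc (0:ℝ) 1 :=
  ⟨le_max_left _ _, max_le (by norm_num) (min_le_left _ _)⟩

lemma cl_eq {u : ℝ} (h : u ∈ Icc (0:ℝ) 1) : cl u = u := by
  have h1 : min 1 u = u := min_eq_right h.2
  simp [cl, h1, max_eq_right h.1]

lemma cont_cl : Continuous cl := continuous_const.max (continuous_const.min continuous_id)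

lemma uIcc_sub {u : ℝ} (hu : u ∈ Icc (0:ℝ) 1) : uIcc (0:ℝ) u ⊆ Icc 0 1 := by
  rw [uIcc_of_le hu.1]; exact Icc_subset_Icc le_rfl hu.2

lemma eq_zero_of_forall_clm {E : Type*} [NormedAddCommGroup E] [NormedSpace ℝ E]
    [FiniteDimensional ℝ E] {x : E} (h : ∀ α : E →L[ℝ] ℝ, α x = 0) : x = 0 := by
  refine (Module.forall_dual_apply_eq_zero_iff ℝ x).mp fun φ => ?_
  simpa using h (LinearMap.toContinuousLinearMap φ)

lemma mem_of_forall_dual {V : Type*} [AddCommGroup V] [Module ℝ V] {p : Submodule ℝ V} {z : V}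
    (h : ∀ F : Module.Dual ℝ V, (∀ y ∈ p, F y = 0) → F z = 0) : z ∈ p := by
  by_contra hz
  obtain ⟨f, hfz, hmap⟩ := p.exists_dual_map_eq_bot_of_notMem hz inferInstance
  refine hfz (h f fun y hy => ?_)
  have : f y ∈ p.map f := Submodule.mem_map_of_mem hy
  rwa [hmap, Submodule.mem_bot] at this

lemma eqOn_zero_of_sq {f : ℝ → ℝ} (hf : Continuous f)
    (h : ∫ u in (0:ℝ)..1, f u * f u = 0) : ∀ u ∈ Icc (0:ℝ) 1, f u = 0 := by
  have hi : IntervalIntegrable (fun u => f u * f u) volume 0 1 := (hf.mul hf).intervalIntegrable _ _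
  have h0 : (fun u => f u * f u) =ᵐ[volume.restrict (Ioc (0:ℝ) 1)] 0 := by
    refine (intervalIntegral.integral_eq_zero_iff_of_le_of_nonneg_ae zero_le_one ?_ hi).1 h
    exact Filter.Eventually.of_forall fun u => mul_self_nonneg _
  have h1 : (fun u => f u * f u) =ᵐ[volume.restrict (Icc (0:ℝ) 1)] 0 := by
    rwa [Measure.restrict_congr_set Ioc_ae_eq_Icc] at h0
  have h2 : EqOn (fun u => f u * f u) (0 : ℝ → ℝ) (Icc (0:ℝ) 1) :=
    Measure.eqOn_Icc_of_ae_eq volume (zero_ne_one) h1 (hf.mul hf).continuousOn continuousOn_const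
  intro u hu
  have := h2 hu
  simpa [mul_self_eq_zero] using this

lemma hasDerivAt_primitive {E : Type*} [NormedAddCommGroup E] [NormedSpace ℝ E] [CompleteSpace E]
    {f : ℝ → E} (hf : Continuous f) (u : ℝ) :
    HasDerivAt (fun v => ∫ s in (0:ℝ)..v, f s) (f u) u :=
  intervalIntegral.integral_hasDerivAt_right (hf.intervalIntegrable _ _)
    hf.stronglyMeasurable.stronglyMeasurableAtFilter hf.continuousAt

lemma omega_integrable {E : Type*} [NormedAddCommGroup E] [NormedSpace ℝ E] (a w : WPair E) :
    IntervalIntegrable (fun u => a.phi u (w.lam u) - w.phi u (a.lam u)) volume 0 1 :=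
  ((a.phi_cont.clm_apply w.lam_cont).sub
    (w.phi_cont.clm_apply a.lam_cont)).intervalIntegrable_of_Icc zero_le_one

end OmegaAux

section Backward

variable {E₀ E₁ : Type*}
    [NormedAddCommGroup E₀] [NormedSpace ℝ E₀] [FiniteDimensional ℝ E₀]
    [NormedAddCommGroup E₁] [NormedSpace ℝ E₁] [FiniteDimensional ℝ E₁]

theorem backward_incl
    (π₀ : (E₀ →L[ℝ] ℝ) →ₗ[ℝ] E₀)
    (hskew₀ : ∀ α β : E₀ →L[ℝ] ℝ, α (π₀ β) = - β (π₀ α))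
    (U : E₁ ≃L[ℝ] E₀) (T₀ : Submodule ℝ E₀) (T₁ : Submodule ℝ E₁)
    (w : WPair E₀) (b b' : ℝ → (E₀ →L[ℝ] ℝ))
    (hb'c : ContinuousOn b' (Icc 0 1))
    (hbd : ∀ u ∈ Icc (0:ℝ) 1, HasDerivWithinAt b (b' u) (Icc 0 1) u)
    (hb0 : b 0 ∈ Ann T₀) (hb1 : (b 1).comp (U : E₁ →L[ℝ] E₀) ∈ Ann T₁)
    (hlam : ∀ u ∈ Icc (0:ℝ) 1, w.lam u = π₀ (b u))
    (hphi : ∀ u ∈ Icc (0:ℝ) 1, w.phi u = - b' u) :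
    w ∈ orth (VSet π₀ U T₀ T₁) := by
  intro a ha
  obtain ⟨haev, ha0, ha1⟩ := ha
  set P0 : (E₀ →L[ℝ] ℝ) →L[ℝ] E₀ := LinearMap.toContinuousLinearMap π₀ with hP0def
  have hP0 : ∀ x, P0 x = π₀ x := fun x => by simp [hP0def]
  set Φa : ℝ → E₀ →L[ℝ] ℝ := fun u => a.phi (cl u) with hΦadef
  have hΦac : Continuous Φa := a.phi_cont.comp_continuous cont_cl cl_mem
  set La : ℝ → E₀ := fun u => a.lam 0 - P0 (∫ s in (0:ℝ)..u, Φa s) with hLadef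
  have hLa : ∀ u ∈ Icc (0:ℝ) 1, La u = a.lam u := by
    intro u hu
    rw [haev u hu, hLadef]
    simp only
    rw [hP0]
    congr 2
    refine intervalIntegral.integral_congr fun s hs => ?_
    simp [hΦadef, cl_eq (uIcc_sub hu hs)]
  have hLad : ∀ u, HasDerivAt La (-(P0 (Φa u))) u := fun u =>
    ((P0.hasFDerivAt.comp_hasDerivAt u (hasDerivAt_primitive hΦac u)).const_sub (a.lam 0))
  have hLac : Continuous La := by
    have : Differentiable ℝ La := fun u => (hLad u).differentiableAt
    exact this.continuous
  set q : ℝ → ℝ := fun u => (b u) (La u) with hqdef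
  have hbcont : ContinuousOn b (Icc 0 1) := fun u hu => (hbd u hu).continuousWithinAt
  have hqc : ContinuousOn q (Icc 0 1) := hbcont.clm_apply hLac.continuousOn
  have key : ∀ u ∈ Ioo (0:ℝ) 1,
      HasDerivWithinAt q (a.phi u (w.lam u) - w.phi u (a.lam u)) (Ioi u) u := by
    intro u hu
    have hu' : u ∈ Icc (0:ℝ) 1 := Ioo_subset_Icc_self hu
    have h1 : HasDerivWithinAt b (b' u) (Ioi u) u :=
      (hbd u hu').mono_of_mem_nhdsWithin
        (nhdsWithin_le_nhds (Filter.mem_of_superset (isOpen_Ioo.mem_nhds hu) Ioo_subset_Icc_self))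
    have h2 := h1.clm_apply (hLad u).hasDerivWithinAt
    have heq : a.phi u (w.lam u) - w.phi u (a.lam u)
        = b' u (La u) + (b u) (-(P0 (Φa u))) := by
      rw [hlam u hu', hphi u hu', hLa u hu']
      have h3 : a.phi u (π₀ (b u)) = - (b u) (π₀ (a.phi u)) := hskew₀ _ _
      have h4 : Φa u = a.phi u := by rw [hΦadef]; simp [cl_eq hu']
      rw [h3, h4, map_neg, hP0]
      simp
      ring
    rw [heq]
    exact h2
  have hΩ : Omega a w = q 1 - q 0 := by
    exact intervalIntegral.integral_eq_sub_of_hasDeriv_right_of_le zero_le_one hqc key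
      (omega_integrable a w)
  rw [Omega] at hΩ ⊢
  rw [hΩ, hqdef]
  simp only
  rw [hLa 1 (by norm_num), hLa 0 (by norm_num)]
  have hz0 : (b 0) (a.lam 0) = 0 := hb0 _ ha0
  have hz1 : (b 1) (a.lam 1) = 0 := by
    have : a.lam 1 = U (U.symm (a.lam 1)) := (U.apply_symm_apply _).symm
    rw [this]
    exact hb1 _ ha1
  rw [hz0, hz1, sub_zero]

end Backward

section Forward

variable {E₀ E₁ : Type*}
    [NormedAddCommGroup E₀] [NormedSpace ℝ E₀] [FiniteDimensional ℝ E₀]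
    [NormedAddCommGroup E₁] [NormedSpace ℝ E₁] [FiniteDimensional ℝ E₁]

lemma exists_b0 (π₀ : (E₀ →L[ℝ] ℝ) →ₗ[ℝ] E₀)
    (hskew : ∀ α β : E₀ →L[ℝ] ℝ, α (π₀ β) = - β (π₀ α))
    (S₀ S₁ : Submodule ℝ E₀) (lam0 : E₀) (β : E₀ →L[ℝ] ℝ)
    (hstar : ∀ (x₀ : E₀) (α : E₀ →L[ℝ] ℝ), x₀ ∈ S₀ → x₀ - π₀ α ∈ S₁ → α (lam0 - π₀ β) = β x₀) :
    ∃ b₀ : E₀ →L[ℝ] ℝ, π₀ b₀ = lam0 ∧ (∀ x ∈ S₀, b₀ x = 0) ∧ ∀ x ∈ S₁, b₀ x = β x := by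
  classical
  let r₀ : (E₀ →L[ℝ] ℝ) →ₗ[ℝ] Module.Dual ℝ ↥S₀ :=
    { toFun := fun b => (b : E₀ →ₗ[ℝ] ℝ).comp S₀.subtype
      map_add' := fun a b => by ext x; rfl
      map_smul' := fun c b => by ext x; rfl }
  let r₁ : (E₀ →L[ℝ] ℝ) →ₗ[ℝ] Module.Dual ℝ ↥S₁ :=
    { toFun := fun b => (b : E₀ →ₗ[ℝ] ℝ).comp S₁.subtype
      map_add' := fun a b => by ext x; rfl
      map_smul' := fun c b => by ext x; rfl }
  let Φ : (E₀ →L[ℝ] ℝ) →ₗ[ℝ] E₀ × (Module.Dual ℝ ↥S₀ × Module.Dual ℝ ↥S₁) :=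
    LinearMap.prod π₀ (LinearMap.prod r₀ r₁)
  have hz : (lam0, ((0 : Module.Dual ℝ ↥S₀), r₁ β)) ∈ LinearMap.range Φ := by
    apply mem_of_forall_dual
    intro F hF
    set ξ : Module.Dual ℝ E₀ := F.comp (LinearMap.inl ℝ _ _) with hξdef
    set A : Module.Dual ℝ (Module.Dual ℝ ↥S₀) :=
      F.comp ((LinearMap.inr ℝ E₀ _).comp (LinearMap.inl ℝ _ _)) with hAdef
    set Bd : Module.Dual ℝ (Module.Dual ℝ ↥S₁) :=
      F.comp ((LinearMap.inr ℝ E₀ _).comp (LinearMap.inr ℝ _ _)) with hBdef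
    have hdecomp : ∀ (x : E₀) (g : Module.Dual ℝ ↥S₀) (h : Module.Dual ℝ ↥S₁),
        F (x, (g, h)) = ξ x + A g + Bd h := by
      intro x g h
      have hx : (x, (g, h)) = ((x, (0,0)) : E₀ × _) + ((0, (g, 0)) : E₀ × _)
          + ((0, (0, h)) : E₀ × _) := by
        simp [Prod.ext_iff]
      rw [hx, map_add, map_add]; rfl
    set s₀ : ↥S₀ := (Module.evalEquiv ℝ ↥S₀).symm A with hs₀def
    set s₁ : ↥S₁ := (Module.evalEquiv ℝ ↥S₁).symm Bd with hs₁def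
    have hA : ∀ g : Module.Dual ℝ ↥S₀, A g = g s₀ :=
      fun g => (Module.apply_evalEquiv_symm_apply ℝ ↥S₀ g A).symm
    have hB : ∀ g : Module.Dual ℝ ↥S₁, Bd g = g s₁ :=
      fun g => (Module.apply_evalEquiv_symm_apply ℝ ↥S₁ g Bd).symm
    set ξ' : E₀ →L[ℝ] ℝ := LinearMap.toContinuousLinearMap ξ with hξ'def
    have hξ' : ∀ x, ξ' x = ξ x := fun x => by simp [hξ'def]
    have hvan : ∀ b : E₀ →L[ℝ] ℝ, b ((s₀ : E₀) + (s₁ : E₀) - π₀ ξ') = 0 := by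
      intro b
      have h0 := hF (Φ b) ⟨b, rfl⟩
      have hΦb : Φ b = (π₀ b, (r₀ b, r₁ b)) := rfl
      rw [hΦb, hdecomp] at h0
      have h1 : ξ (π₀ b) = - b (π₀ ξ') := by rw [← hξ']; exact hskew ξ' b
      have h2 : A (r₀ b) = b (s₀ : E₀) := by rw [hA]; rfl
      have h3 : Bd (r₁ b) = b (s₁ : E₀) := by rw [hB]; rfl
      rw [h1, h2, h3] at h0
      rw [map_sub, map_add]
      linarith
    have hsum : (s₀ : E₀) + (s₁ : E₀) - π₀ ξ' = 0 := eq_zero_of_forall_clm hvan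
    have hπξ : π₀ ξ' = (s₀ : E₀) + (s₁ : E₀) := (sub_eq_zero.mp hsum).symm
    have hmem : (s₀ : E₀) - π₀ ξ' ∈ S₁ := by
      rw [hπξ]
      have : (s₀ : E₀) - ((s₀ : E₀) + (s₁ : E₀)) = -(s₁ : E₀) := by abel
      rw [this]
      exact S₁.neg_mem s₁.2
    have hst : ξ' (lam0 - π₀ β) = β (s₀ : E₀) := hstar (s₀ : E₀) ξ' s₀.2 hmem
    rw [hdecomp]
    have hb1 : Bd (r₁ β) = β (s₁ : E₀) := by rw [hB]; rfl
    have hskew2 : ξ' (π₀ β) = - β (π₀ ξ') := hskew ξ' β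
    rw [hπξ] at hskew2
    have hξlam : ξ lam0 = - β (s₁ : E₀) := by
      rw [← hξ']
      rw [map_sub] at hst
      rw [map_add] at hskew2
      linarith
    rw [hξlam, hb1, map_zero]
    ring
  obtain ⟨b₀, hb⟩ := hz
  have h1 : π₀ b₀ = lam0 := congrArg Prod.fst hb
  have h2 : r₀ b₀ = 0 := congrArg (fun p => p.2.1) hb
  have h3 : r₁ b₀ = r₁ β := congrArg (fun p => p.2.2) hb
  refine ⟨b₀, h1, fun x hx => ?_, fun x hx => ?_⟩
  · have := congrFun (congrArg DFunLike.coe h2) ⟨x, hx⟩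
    exact this
  · have := congrFun (congrArg DFunLike.coe h3) ⟨x, hx⟩
    exact this

theorem forward_incl
    (π₀ : (E₀ →L[ℝ] ℝ) →ₗ[ℝ] E₀)
    (hskew₀ : ∀ α β : E₀ →L[ℝ] ℝ, α (π₀ β) = - β (π₀ α))
    (U : E₁ ≃L[ℝ] E₀) (T₀ : Submodule ℝ E₀) (T₁ : Submodule ℝ E₁)
    (w : WPair E₀) (hw : w ∈ orth (VSet π₀ U T₀ T₁)) :
    ∃ b b' : ℝ → (E₀ →L[ℝ] ℝ),
        ContinuousOn b' (Icc 0 1) ∧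
        (∀ u ∈ Icc (0:ℝ) 1, HasDerivWithinAt b (b' u) (Icc 0 1) u) ∧
        b 0 ∈ Ann T₀ ∧ (b 1).comp (U : E₁ →L[ℝ] E₀) ∈ Ann T₁ ∧
        (∀ u ∈ Icc (0:ℝ) 1, w.lam u = π₀ (b u)) ∧
        (∀ u ∈ Icc (0:ℝ) 1, w.phi u = - b' u) := by
  set P0 : (E₀ →L[ℝ] ℝ) →L[ℝ] E₀ := LinearMap.toContinuousLinearMap π₀ with hP0def
  have hP0 : ∀ x, P0 x = π₀ x := fun x => by simp [hP0def]
  set Φ : ℝ → E₀ →L[ℝ] ℝ := fun u => w.phi (cl u) with hΦdef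
  have hΦc : Continuous Φ := w.phi_cont.comp_continuous cont_cl cl_mem
  have hΦeq : ∀ u ∈ Icc (0:ℝ) 1, Φ u = w.phi u := fun u hu => by simp [hΦdef, cl_eq hu]
  set B : ℝ → E₀ →L[ℝ] ℝ := fun u => ∫ s in (0:ℝ)..u, Φ s with hBdef
  have hBd : ∀ u, HasDerivAt B (Φ u) u := fun u => hasDerivAt_primitive hΦc u
  have hB0 : B 0 = 0 := intervalIntegral.integral_same
  have hlamcl : Continuous (fun u => w.lam (cl u)) := w.lam_cont.comp_continuous cont_cl cl_mem
  -- exchange lemma : α (π₀ (B u)) = - ∫₀ᵘ Φ s (π₀ α)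
  have hexch : ∀ (α : E₀ →L[ℝ] ℝ) (u : ℝ), α (π₀ (B u)) = - ∫ s in (0:ℝ)..u, Φ s (π₀ α) := by
    intro α u
    have h1 : (α.comp P0) (B u) = ∫ s in (0:ℝ)..u, (α.comp P0) (Φ s) :=
      ((α.comp P0).intervalIntegral_comp_comm (hΦc.intervalIntegrable 0 u)).symm
    have h2 : ∀ s, (α.comp P0) (Φ s) = - (Φ s (π₀ α)) := by
      intro s
      rw [ContinuousLinearMap.comp_apply, hP0, hskew₀ α (Φ s)]
    calc α (π₀ (B u)) = (α.comp P0) (B u) := by rw [ContinuousLinearMap.comp_apply, hP0]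
      _ = ∫ s in (0:ℝ)..u, (α.comp P0) (Φ s) := h1
      _ = ∫ s in (0:ℝ)..u, - (Φ s (π₀ α)) := by simp_rw [h2]
      _ = - ∫ s in (0:ℝ)..u, Φ s (π₀ α) := intervalIntegral.integral_neg
  -- Step A : the evolution equation holds for w itself
  have stepA : ∀ u ∈ Icc (0:ℝ) 1, w.lam u = w.lam 0 - π₀ (B u) := by
    have key : ∀ (α : E₀ →L[ℝ] ℝ), ∀ u ∈ Icc (0:ℝ) 1,
        α (w.lam u) + α (π₀ (B u)) = α (w.lam 0) := by
      intro α
      set h : ℝ → ℝ := fun s => Φ s (π₀ α) with hhdef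
      have hhc : Continuous h := hΦc.clm_apply continuous_const
      set G : ℝ → ℝ := fun u => ∫ s in (0:ℝ)..u, h s with hGdef
      have hGd : ∀ u, HasDerivAt G (h u) u := fun u => hasDerivAt_primitive hhc u
      have hGc : Continuous G :=
        Differentiable.continuous (fun u => (hGd u).differentiableAt)
      set g : ℝ → ℝ := fun u => α (w.lam (cl u)) with hgdef
      have hgc : Continuous g := continuous_const.clm_apply hlamcl
      set f : ℝ → ℝ := fun u => g u - G u with hfdef
      have hfc : Continuous f := hgc.sub hGc
      set c : ℝ := ∫ u in (0:ℝ)..1, f u with hcdef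
      set ρ : ℝ → ℝ := fun u => f u - c with hρdef
      have hρc : Continuous ρ := hfc.sub continuous_const
      set R : ℝ → ℝ := fun u => ∫ s in (0:ℝ)..u, ρ s with hRdef
      have hRd : ∀ u, HasDerivAt R (ρ u) u := fun u => hasDerivAt_primitive hρc u
      have hR0 : R 0 = 0 := intervalIntegral.integral_same
      have hRc : Continuous R :=
        Differentiable.continuous (fun u => (hRd u).differentiableAt)
      have hR1 : R 1 = 0 := by
        rw [hRdef]
        simp only [hρdef]
        rw [intervalIntegral.integral_sub (hfc.intervalIntegrable _ _) intervalIntegrable_const]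
        simp [hcdef]
      set a : WPair E₀ :=
        ⟨fun u => (-R u) • π₀ α, fun u => ρ u • α,
          ((hRc.neg).smul continuous_const).continuousOn,
          (hρc.smul continuous_const).continuousOn⟩ with hadef
      have halam : ∀ u, a.lam u = (-R u) • π₀ α := fun u => rfl
      have haphi : ∀ u, a.phi u = ρ u • α := fun u => rfl
      have ha : a ∈ VSet π₀ U T₀ T₁ := by
        refine ⟨?_, ?_, ?_⟩
        · intro u hu
          rw [halam, halam]
          have hint : (∫ s in (0:ℝ)..u, a.phi s) = R u • α := by
            simp only [haphi]
            rw [intervalIntegral.integral_smul_const ρ α]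
          rw [hint, _root_.map_smul]
          simp [hR0]
        · rw [halam, hR0]
          simp only [neg_zero, zero_smul]
          exact T₀.zero_mem
        · rw [halam, hR1]
          simp only [neg_zero, zero_smul, map_zero]
          exact T₁.zero_mem
      have h0 : Omega a w = 0 := hw a ha
      -- rewrite the Omega integrand
      have hcongr : Omega a w = ∫ u in (0:ℝ)..1, (ρ u * g u + R u * h u) := by
        rw [Omega]
        refine intervalIntegral.integral_congr fun u hu => ?_
        have hu' : u ∈ Icc (0:ℝ) 1 := by rwa [uIcc_of_le zero_le_one] at hu
        rw [haphi, halam]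
        have e1 : (ρ u • α) (w.lam u) = ρ u * α (w.lam u) := rfl
        have e2 : w.phi u ((-R u) • π₀ α) = (-R u) * (w.phi u (π₀ α)) := by
          rw [_root_.map_smul]; rfl
        rw [e1, e2]
        have e3 : g u = α (w.lam u) := by rw [hgdef]; simp [cl_eq hu']
        have e4 : h u = w.phi u (π₀ α) := by rw [hhdef]; simp only; rw [hΦeq u hu']
        rw [e3, e4]
        ring
      -- integration by parts
      have hibp : ∫ u in (0:ℝ)..1, (ρ u * G u + R u * h u) = 0 := by
        have hQd : ∀ u ∈ uIcc (0:ℝ) 1, HasDerivAt (fun v => R v * G v) (ρ u * G u + R u * h u) u :=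
          fun u _ => (hRd u).mul (hGd u)
        rw [intervalIntegral.integral_eq_sub_of_hasDerivAt hQd
          (((hρc.mul hGc).add (hRc.mul hhc)).intervalIntegrable _ _)]
        rw [hR1]
        simp [hRdef]
      have hrf : ∫ u in (0:ℝ)..1, ρ u * f u = 0 := by
        have hsplit : ∀ u, ρ u * f u = (ρ u * g u + R u * h u) - (ρ u * G u + R u * h u) := by
          intro u
          rw [hfdef]
          ring
        simp_rw [hsplit]
        rw [intervalIntegral.integral_sub (f := fun u => ρ u * g u + R u * h u)
          (g := fun u => ρ u * G u + R u * h u)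
          (((hρc.mul hgc).add (hRc.mul hhc)).intervalIntegrable _ _)
          (((hρc.mul hGc).add (hRc.mul hhc)).intervalIntegrable _ _)]
        rw [← hcongr, h0, hibp, sub_zero]
      have hrc : ∫ u in (0:ℝ)..1, ρ u * c = 0 := by
        rw [intervalIntegral.integral_mul_const]
        have : ∫ u in (0:ℝ)..1, ρ u = R 1 := rfl
        rw [this, hR1, zero_mul]
      have hsq : ∫ u in (0:ℝ)..1, ρ u * ρ u = 0 := by
        have hsplit : ∀ u, ρ u * ρ u = ρ u * f u - ρ u * c := by
          intro u
          rw [hρdef]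
          ring
        simp_rw [hsplit]
        rw [intervalIntegral.integral_sub (f := fun u => ρ u * f u) (g := fun u => ρ u * c)
          ((hρc.mul hfc).intervalIntegrable _ _)
          ((hρc.mul continuous_const).intervalIntegrable _ _), hrf, hrc, sub_zero]
      have hρ0 : ∀ u ∈ Icc (0:ℝ) 1, ρ u = 0 := eqOn_zero_of_sq hρc hsq
      intro u hu
      have hfu : f u = c := by
        have h' : f u - c = 0 := hρ0 u hu
        linarith [h']
      have hf0 : f 0 = c := by
        have h' : f 0 - c = 0 := hρ0 0 (by norm_num)
        linarith [h']
      have hfeq : f u = f 0 := by rw [hfu, hf0]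
      -- unfold f
      have e5 : f u = α (w.lam u) - G u := by
        rw [hfdef, hgdef]
        simp [cl_eq hu]
      have e6 : f 0 = α (w.lam 0) := by
        rw [hfdef, hgdef, hGdef]
        simp [cl_eq (show (0:ℝ) ∈ Icc (0:ℝ) 1 by norm_num)]
      have e7 : G u = - α (π₀ (B u)) := by
        rw [hGdef]
        simp only [hhdef]
        rw [hexch α u]
        ring
      rw [e5, e6, e7] at hfeq
      linarith [hfeq]
    intro u hu
    have hx : w.lam u - (w.lam 0 - π₀ (B u)) = 0 := by
      refine eq_zero_of_forall_clm fun α => ?_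
      have := key α u hu
      rw [map_sub, map_sub]
      linarith [this]
    exact sub_eq_zero.mp hx
  -- Step B : boundary identity
  have stepB : ∀ (x₀ : E₀) (α : E₀ →L[ℝ] ℝ), x₀ ∈ T₀ → x₀ - π₀ α ∈ Submodule.map
        ((U.toLinearEquiv : E₁ →ₗ[ℝ] E₀)) T₁ →
      α (w.lam 0 - π₀ (B 1)) = (B 1) x₀ := by
    intro x₀ α hx₀ hx₁
    set a : WPair E₀ :=
      ⟨fun u => x₀ - u • π₀ α, fun _ => α,
        ((continuous_const).sub (continuous_id.smul continuous_const)).continuousOn,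
        continuousOn_const⟩ with hadef
    have halam : ∀ u, a.lam u = x₀ - u • π₀ α := fun u => rfl
    have haphi : ∀ u, a.phi u = α := fun u => rfl
    have ha : a ∈ VSet π₀ U T₀ T₁ := by
      refine ⟨?_, ?_, ?_⟩
      · intro u hu
        rw [halam, halam]
        have hint : (∫ s in (0:ℝ)..u, a.phi s) = u • α := by
          simp only [haphi]
          rw [intervalIntegral.integral_const]
          simp
        rw [hint, _root_.map_smul]
        simp
      · rw [halam]
        simpa using hx₀
      · rw [halam]
        obtain ⟨y, hy, hUy⟩ := hx₁
        have : x₀ - (1:ℝ) • π₀ α = U y := by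
          rw [one_smul]
          rw [← hUy]
          rfl
        rw [this]
        simpa using hy
    have h0 : Omega a w = 0 := hw a ha
    set Λ : ℝ → E₀ := fun u => w.lam 0 - P0 (B u) with hΛdef
    have hΛd : ∀ u, HasDerivAt Λ (-(P0 (Φ u))) u := fun u =>
      (P0.hasFDerivAt.comp_hasDerivAt u (hBd u)).const_sub _
    have hΛc : Continuous Λ := Differentiable.continuous (fun u => (hΛd u).differentiableAt)
    have hΛeq : ∀ u ∈ Icc (0:ℝ) 1, Λ u = w.lam u := by
      intro u hu
      rw [hΛdef]
      simp only
      rw [hP0, ← stepA u hu]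
    have hq2d : ∀ u, HasDerivAt (fun v => v * α (Λ v)) (α (Λ u) + u * (Φ u (π₀ α))) u := by
      intro u
      have h1 : HasDerivAt (fun v => α (Λ v)) (α (-(P0 (Φ u)))) u :=
        α.hasFDerivAt.comp_hasDerivAt u (hΛd u)
      have h2 : α (-(P0 (Φ u))) = Φ u (π₀ α) := by
        rw [map_neg, hP0, hskew₀ α (Φ u), neg_neg]
      rw [h2] at h1
      have h3 := (hasDerivAt_id u).mul h1
      simpa using (show HasDerivAt (fun v => v * α (Λ v)) (1 * α (Λ u) + id u * (Φ u) (π₀ α)) u from h3)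
    have hfirst : ∫ u in (0:ℝ)..1, (α (Λ u) + u * (Φ u (π₀ α))) = α (Λ 1) := by
      have hint : IntervalIntegrable (fun u => α (Λ u) + u * (Φ u (π₀ α))) volume 0 1 := by
        apply Continuous.intervalIntegrable
        exact (continuous_const.clm_apply hΛc).add
          (continuous_id.mul (hΦc.clm_apply continuous_const))
      rw [intervalIntegral.integral_eq_sub_of_hasDerivAt (fun u _ => hq2d u) hint]
      simp
    have hsecond : ∫ u in (0:ℝ)..1, Φ u x₀ = (B 1) x₀ := by
      have hΦint : IntervalIntegrable Φ volume 0 1 := hΦc.intervalIntegrable 0 1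
      have := (ContinuousLinearMap.apply ℝ ℝ x₀).intervalIntegral_comp_comm hΦint
      simpa [hBdef] using this
    have hcongr : Omega a w = (∫ u in (0:ℝ)..1, (α (Λ u) + u * (Φ u (π₀ α))))
        - ∫ u in (0:ℝ)..1, Φ u x₀ := by
      rw [Omega, ← intervalIntegral.integral_sub]
      · refine intervalIntegral.integral_congr fun u hu => ?_
        have hu' : u ∈ Icc (0:ℝ) 1 := by rwa [uIcc_of_le zero_le_one] at hu
        rw [haphi, halam]
        have e1 : w.phi u (x₀ - u • π₀ α) = w.phi u x₀ - u * (w.phi u (π₀ α)) := by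
          rw [map_sub, _root_.map_smul]
          rfl
        rw [e1, hΛeq u hu', hΦeq u hu']
        ring
      · apply Continuous.intervalIntegrable
        exact (continuous_const.clm_apply hΛc).add
          (continuous_id.mul (hΦc.clm_apply continuous_const))
      · exact (hΦc.clm_apply continuous_const).intervalIntegrable _ _
    rw [hcongr, hfirst, hsecond] at h0
    have hΛ1 : Λ 1 = w.lam 0 - π₀ (B 1) := by rw [hΛdef]; simp only [hP0]
    rw [hΛ1] at h0
    linarith [h0]
  -- linear algebra step
  set S₁ : Submodule ℝ E₀ := Submodule.map ((U.toLinearEquiv : E₁ →ₗ[ℝ] E₀)) T₁ with hS₁def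
  obtain ⟨b₀, hb₀1, hb₀2, hb₀3⟩ := exists_b0 π₀ hskew₀ T₀ S₁ (w.lam 0) (B 1) stepB
  refine ⟨fun u => b₀ - B u, fun u => -Φ u, (hΦc.neg).continuousOn, ?_, ?_, ?_, ?_, ?_⟩
  · intro u _
    exact (((hBd u).const_sub b₀)).hasDerivWithinAt
  · intro v hv
    simp only [hB0]
    rw [sub_zero]
    exact hb₀2 v hv
  · intro v hv
    have hUv : (U : E₁ →L[ℝ] E₀) v ∈ S₁ := ⟨v, hv, rfl⟩
    have := hb₀3 _ hUv
    simp only [ContinuousLinearMap.comp_apply, ContinuousLinearMap.coe_sub', Pi.sub_apply]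
    rw [this]
    ring
  · intro u hu
    rw [stepA u hu, ← hb₀1, ← map_sub]
  · intro u hu
    rw [← hΦeq u hu]
    simp

end Forward

theorem orth_VSet_eq_symmetries
    (E₀ E₁ : Type*)
    [NormedAddCommGroup E₀] [NormedSpace ℝ E₀] [FiniteDimensional ℝ E₀]
    [NormedAddCommGroup E₁] [NormedSpace ℝ E₁] [FiniteDimensional ℝ E₁]
    (π₀ : (E₀ →L[ℝ] ℝ) →ₗ[ℝ] E₀) (π₁ : (E₁ →L[ℝ] ℝ) →ₗ[ℝ] E₁)
    (hskew₀ : ∀ α β : E₀ →L[ℝ] ℝ, α (π₀ β) = - β (π₀ α))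
    (hskew₁ : ∀ α β : E₁ →L[ℝ] ℝ, α (π₁ β) = - β (π₁ α))
    (U : E₁ ≃L[ℝ] E₀)
    (hU : ∀ α : E₀ →L[ℝ] ℝ, U (π₁ (α.comp (U : E₁ →L[ℝ] E₀))) = π₀ α)
    (T₀ : Submodule ℝ E₀) (T₁ : Submodule ℝ E₁)
    (hT₀ : ∀ α ∈ Ann T₀, π₀ α ∈ T₀) (hT₁ : ∀ α ∈ Ann T₁, π₁ α ∈ T₁) :
    orth (VSet π₀ U T₀ T₁) =
      {w : WPair E₀ | ∃ b b' : ℝ → (E₀ →L[ℝ] ℝ),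
        ContinuousOn b' (Icc 0 1) ∧
        (∀ u ∈ Icc (0:ℝ) 1, HasDerivWithinAt b (b' u) (Icc 0 1) u) ∧
        b 0 ∈ Ann T₀ ∧ (b 1).comp (U : E₁ →L[ℝ] E₀) ∈ Ann T₁ ∧
        (∀ u ∈ Icc (0:ℝ) 1, w.lam u = π₀ (b u)) ∧
        (∀ u ∈ Icc (0:ℝ) 1, w.phi u = - b' u)} := by
  ext w
  constructor
  · intro hw
    exact forward_incl π₀ hskew₀ U T₀ T₁ w hw
  · rintro ⟨b, b', h1, h2, h3, h4, h5, h6⟩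
    exact backward_incl π₀ hskew₀ U T₀ T₁ w b b' h1 h2 h3 h4 h5 h6
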